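/- Let k ∈ ℕ with k ≥ 1, n ≥ 1, ε ∈ (0,1), δ ∈ (0,1), and define Δ := min{ ε / √(8 k log(1/δ)), ε / (8 log(1/δ)) }; assume Δ < 1 and k Δ² ≤ ε. Let λ₁, …, λ_n be strictly positive reals with Σ_{j=1}^n (λ_j - 1)² ≤ Δ² and Σ_{j=1}^n (1 - 1/λ_j)² ≤ Δ². Let (h_{i,j})_{i∈[k], j∈[n]} be independent standard Gaussian random variables, and define the random variable Z := ½ Σ_{i=1}^k Σ_{j=1}^n ( (λ_j - 1) h_{i,j}² - log(λ_j) ). Then P[Z > ε] ≤ δ. -/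

import Mathlib

open MeasureTheory ProbabilityTheory Real
open scoped NNReal ENNReal

lemma gauss_exp_sq (c : ℝ) (hc : c < 1/2) :
    Integrable (fun x => Real.exp (c * x^2)) (gaussianReal 0 1) ∧
    ∫ x, Real.exp (c * x^2) ∂(gaussianReal 0 1) = (Real.sqrt (1 - 2*c))⁻¹ := by
  have hb : 0 < 1/2 - c := by linarith
  have hπ : 0 < π := Real.pi_pos
  rw [gaussianReal_of_var_ne_zero 0 one_ne_zero]
  have hmeas : Measurable fun x => Real.toNNReal (gaussianPDFReal 0 1 x) :=
    (measurable_gaussianPDFReal 0 1).real_toNNReal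
  have hpdf : gaussianPDF 0 1 = fun x => ((Real.toNNReal (gaussianPDFReal 0 1 x) : ℝ≥0) : ℝ≥0∞) := rfl
  have key : ∀ x : ℝ, gaussianPDFReal 0 1 x * Real.exp (c*x^2)
      = (Real.sqrt (2*π))⁻¹ * Real.exp (-(1/2 - c) * x^2) := by
    intro x
    simp only [gaussianPDFReal, NNReal.coe_one, mul_one, sub_zero]
    rw [mul_assoc, ← Real.exp_add]
    ring_nf
  have hint2 : Integrable (fun x : ℝ => (Real.sqrt (2*π))⁻¹ * Real.exp (-(1/2 - c) * x^2)) :=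
    (integrable_exp_neg_mul_sq hb).const_mul _
  have hsmul : ∀ x : ℝ, (Real.toNNReal (gaussianPDFReal 0 1 x) : ℝ≥0) • Real.exp (c*x^2)
      = (Real.sqrt (2*π))⁻¹ * Real.exp (-(1/2 - c) * x^2) := by
    intro x
    rw [NNReal.smul_def, Real.coe_toNNReal _ (gaussianPDFReal_nonneg 0 1 x), smul_eq_mul, key]
  constructor
  · rw [hpdf, integrable_withDensity_iff_integrable_smul hmeas]
    exact hint2.congr (by simp [hsmul])
  · rw [hpdf, integral_withDensity_eq_integral_smul hmeas]
    calc ∫ x : ℝ, (Real.toNNReal (gaussianPDFReal 0 1 x) : ℝ≥0) • Real.exp (c*x^2)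
        = ∫ x : ℝ, (Real.sqrt (2*π))⁻¹ * Real.exp (-(1/2 - c) * x^2) := by
          simp only [hsmul]
      _ = (Real.sqrt (2*π))⁻¹ * Real.sqrt (π / (1/2 - c)) := by
          rw [integral_const_mul, integral_gaussian]
      _ = (Real.sqrt (1 - 2*c))⁻¹ := by
          rw [show (1:ℝ) - 2*c = 2*(1/2 - c) by ring,
            Real.sqrt_mul (by norm_num : (0:ℝ) ≤ 2) π,
            Real.sqrt_mul (by norm_num : (0:ℝ) ≤ 2) (1/2 - c),
            Real.sqrt_div hπ.le]
          have h1 : Real.sqrt π ≠ 0 := by positivity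
          have h2 : Real.sqrt (1/2 - c) ≠ 0 := by positivity
          have h3 : Real.sqrt 2 ≠ 0 := by positivity
          have h5 : Real.sqrt (1 - 2*c) ≠ 0 := by
            rw [show (1:ℝ) - 2*c = 2*(1/2 - c) by ring]
            positivity
          rw [show (1:ℝ) - 2*c = 2*(1/2 - c) by ring] at h5
          field_simp

lemma pi_integrable_prod {ι : Type*} [Fintype ι] (μ : Measure ℝ) [IsProbabilityMeasure μ]
    (f : ι → ℝ → ℝ) (hf : ∀ i, Integrable (f i) μ) :
    Integrable (fun x : ι → ℝ => ∏ i, f i (x i)) (Measure.pi fun _ => μ) := by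
  letI : MeasureSpace ℝ := { volume := μ }
  exact Integrable.fintype_prod hf

lemma pi_integral_prod {ι : Type*} [Fintype ι] (μ : Measure ℝ) [IsProbabilityMeasure μ]
    (f : ι → ℝ → ℝ) :
    ∫ x : ι → ℝ, ∏ i, f i (x i) ∂(Measure.pi fun _ => μ) = ∏ i, ∫ x, f i x ∂μ := by
  letI : MeasureSpace ℝ := { volume := μ }
  exact integral_fintype_prod_eq_prod f

lemma log_one_sub_ge {u : ℝ} (hu : u ≤ 1/2) : -u - u^2 ≤ Real.log (1 - u) := by
  have h1u : (0:ℝ) < 1 - u := by linarith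
  rcases le_or_gt u 0 with h0 | h0
  · have h := Real.log_le_sub_one_of_pos (show (0:ℝ) < (1-u)⁻¹ by positivity)
    rw [Real.log_inv] at h
    have h2 : 1 - (1-u)⁻¹ ≤ Real.log (1-u) := by linarith
    have h3 : (1-u) * (1-u)⁻¹ = 1 := mul_inv_cancel₀ h1u.ne'
    nlinarith [sq_nonneg u, mul_pos h1u h1u]
  · have hx : (0:ℝ) ≤ u + u^2 := by positivity
    have hexp : 1 + (u+u^2) + (u+u^2)^2/2 + (u+u^2)^3/6 ≤ Real.exp (u+u^2) := by
      have := Real.sum_le_exp_of_nonneg hx 4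
      simp [Finset.sum_range_succ, Nat.factorial] at this
      linarith
    have key : Real.exp (-u - u^2) ≤ 1 - u := by
      rw [show -u - u^2 = -(u+u^2) by ring, Real.exp_neg]
      rw [inv_le_iff_one_le_mul₀ (Real.exp_pos _)]
      calc (1:ℝ) ≤ (1 + (u+u^2) + (u+u^2)^2/2 + (u+u^2)^3/6) * (1-u) := by nlinarith [sq_nonneg u, pow_pos h0 3, pow_pos h0 4, pow_pos h0 5, pow_pos h0 6]
        _ ≤ Real.exp (u+u^2) * (1-u) := by nlinarith [Real.exp_pos (u+u^2)]
        _ = (1-u) * Real.exp (u+u^2) := by ring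
    calc -u - u^2 = Real.log (Real.exp (-u - u^2)) := (Real.log_exp _).symm
      _ ≤ Real.log (1-u) := Real.log_le_log (Real.exp_pos _) key

open MeasureTheory ProbabilityTheory

set_option maxHeartbeats 1000000 in
theorem privacy_loss_tail_bound (k n : ℕ) (hk : 1 ≤ k) (hn : 1 ≤ n)
    (ε δ : ℝ) (hε : ε ∈ Set.Ioo (0 : ℝ) 1) (hδ : δ ∈ Set.Ioo (0 : ℝ) 1)
    (Δ : ℝ)
    (hΔdef : Δ = min (ε / Real.sqrt (8 * k * Real.log (1 / δ)))
                     (ε / (8 * Real.log (1 / δ))))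
    (hΔ1 : Δ < 1) (hkΔ : (k : ℝ) * Δ ^ 2 ≤ ε)
    (lam : Fin n → ℝ) (hlampos : ∀ j, 0 < lam j)
    (h1 : ∑ j, (lam j - 1) ^ 2 ≤ Δ ^ 2)
    (h2 : ∑ j, (1 - 1 / lam j) ^ 2 ≤ Δ ^ 2) :
    Measure.pi (fun _ : Fin k × Fin n => gaussianReal 0 1)
      {ω | (1 / 2) * ∑ i, ∑ j, ((lam j - 1) * (ω (i, j)) ^ 2 - Real.log (lam j)) > ε}
      ≤ ENNReal.ofReal δ := by
  obtain ⟨hε0, hε1⟩ := hε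
  obtain ⟨hδ0, hδ1⟩ := hδ
  have hk0 : (0:ℝ) < k := by exact_mod_cast hk
  -- basic positivity
  have HL : 0 < Real.log (1 / δ) := by
    rw [one_div, Real.log_inv]; linarith [Real.log_neg hδ0 hδ1]
  obtain ⟨L, hLdef⟩ : ∃ L : ℝ, L = Real.log (1 / δ) := ⟨_, rfl⟩
  rw [← hLdef] at HL hΔdef
  have hΔpos : 0 < Δ := by
    rw [hΔdef]
    exact lt_min (div_pos hε0 (Real.sqrt_pos.mpr (by positivity)))
      (div_pos hε0 (by positivity))
  obtain ⟨t, htdef⟩ : ∃ t : ℝ, t = min (ε / (2 * k * Δ ^ 2)) (1 / (2 * Δ)) := ⟨_, rfl⟩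
  have ht0 : 0 < t := htdef ▸ lt_min (by positivity) (by positivity)
  have htΔ : t * Δ ≤ 1 / 2 := by
    have h : t ≤ 1 / (2 * Δ) := htdef ▸ min_le_right (ε / (2 * k * Δ ^ 2)) (1 / (2 * Δ))
    calc t * Δ ≤ (1 / (2 * Δ)) * Δ := by
          exact mul_le_mul_of_nonneg_right h hΔpos.le
      _ = 1 / 2 := by field_simp
  have habs : ∀ j, |lam j - 1| ≤ Δ := by
    intro j
    have hterm : (lam j - 1) ^ 2 ≤ Δ ^ 2 :=
      le_trans (Finset.single_le_sum (fun j _ => sq_nonneg (lam j - 1)) (Finset.mem_univ j)) h1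
    calc |lam j - 1| = Real.sqrt ((lam j - 1) ^ 2) := (Real.sqrt_sq_eq_abs _).symm
      _ ≤ Real.sqrt (Δ ^ 2) := Real.sqrt_le_sqrt hterm
      _ = Δ := Real.sqrt_sq hΔpos.le
  -- per-coordinate function
  obtain ⟨Z, hZdef⟩ : ∃ Z : ((Fin k × Fin n) → ℝ) → ℝ,
      Z = fun ω => (1 / 2) * ∑ i, ∑ j, ((lam j - 1) * (ω (i, j)) ^ 2 - Real.log (lam j)) :=
    ⟨_, rfl⟩
  rw [show {ω : (Fin k × Fin n) → ℝ |
      (1 / 2) * ∑ i, ∑ j, ((lam j - 1) * (ω (i, j)) ^ 2 - Real.log (lam j)) > ε}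
      = {ω | Z ω > ε} by simp only [hZdef]]
  obtain ⟨g, hgdef⟩ : ∃ g : Fin k × Fin n → ℝ → ℝ,
      g = fun p x => Real.exp (t * ((1 / 2) * ((lam p.2 - 1) * x ^ 2 - Real.log (lam p.2)))) :=
    ⟨_, rfl⟩
  have hu : ∀ j : Fin n, t * (lam j - 1) ≤ 1 / 2 := by
    intro j
    calc t * (lam j - 1) ≤ t * |lam j - 1| := by
          exact mul_le_mul_of_nonneg_left (le_abs_self _) ht0.le
      _ ≤ t * Δ := mul_le_mul_of_nonneg_left (habs j) ht0.le
      _ ≤ 1 / 2 := htΔ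
  have hc : ∀ j : Fin n, t * (lam j - 1) / 2 < 1 / 2 := by
    intro j; nlinarith [hu j]
  have hg_eq : ∀ p : Fin k × Fin n, ∀ x : ℝ,
      g p x = Real.exp ((t * (lam p.2 - 1) / 2) * x ^ 2) *
        Real.exp (-(t / 2) * Real.log (lam p.2)) := by
    intro p x
    simp only [hgdef]
    rw [← Real.exp_add]
    congr 1
    ring
  have hIg : ∀ p : Fin k × Fin n, Integrable (g p) (gaussianReal 0 1) := by
    intro p
    have := (gauss_exp_sq (t * (lam p.2 - 1) / 2) (hc p.2)).1
    exact (this.mul_const _).congr (Filter.Eventually.of_forall fun x => (hg_eq p x).symm)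
  have hIval : ∀ p : Fin k × Fin n, ∫ x, g p x ∂(gaussianReal 0 1)
      = (Real.sqrt (1 - t * (lam p.2 - 1)))⁻¹ * Real.exp (-(t / 2) * Real.log (lam p.2)) := by
    intro p
    calc ∫ x, g p x ∂(gaussianReal 0 1)
        = ∫ x, Real.exp ((t * (lam p.2 - 1) / 2) * x ^ 2) *
            Real.exp (-(t / 2) * Real.log (lam p.2)) ∂(gaussianReal 0 1) := by
          exact integral_congr_ae (Filter.Eventually.of_forall fun x => hg_eq p x)
      _ = (∫ x, Real.exp ((t * (lam p.2 - 1) / 2) * x ^ 2) ∂(gaussianReal 0 1)) *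
            Real.exp (-(t / 2) * Real.log (lam p.2)) := by
          rw [integral_mul_const]
      _ = (Real.sqrt (1 - 2 * (t * (lam p.2 - 1) / 2)))⁻¹ *
            Real.exp (-(t / 2) * Real.log (lam p.2)) := by
          rw [(gauss_exp_sq (t * (lam p.2 - 1) / 2) (hc p.2)).2]
      _ = _ := by
          rw [show 1 - 2 * (t * (lam p.2 - 1) / 2) = 1 - t * (lam p.2 - 1) by ring]
  -- the bound on each coordinate integral
  obtain ⟨B, hBdef⟩ : ∃ B : Fin n → ℝ, B = fun j =>
      Real.exp ((t / 2) * ((lam j - 1) - Real.log (lam j)) + (t ^ 2 / 2) * (lam j - 1) ^ 2) :=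
    ⟨_, rfl⟩
  have hIB : ∀ p : Fin k × Fin n, ∫ x, g p x ∂(gaussianReal 0 1) ≤ B p.2 := by
    intro p
    rw [hIval p]
    simp only [hBdef]
    obtain ⟨u, hudef⟩ : ∃ u : ℝ, u = t * (lam p.2 - 1) := ⟨_, rfl⟩
    rw [← hudef]
    have h1u : 0 < 1 - u := by have := hu p.2; rw [hudef]; linarith
    have hlog : -u - u ^ 2 ≤ Real.log (1 - u) := log_one_sub_ge (hudef ▸ hu p.2)
    have hsq2 : Real.exp (Real.log (1 - u) / 2) ^ 2 = 1 - u := by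
      rw [← Real.exp_nat_mul, show ((2:ℕ):ℝ) * (Real.log (1 - u) / 2) = Real.log (1 - u) by
        push_cast; ring, Real.exp_log h1u]
    have hsqrt : (Real.sqrt (1 - u))⁻¹ = Real.exp (-(Real.log (1 - u) / 2)) := by
      rw [← hsq2, Real.sqrt_sq (Real.exp_pos _).le, ← Real.exp_neg, hsq2]
    rw [hsqrt, ← Real.exp_add]
    apply Real.exp_le_exp.mpr
    have : (u + u ^ 2) / 2 + -(t / 2) * Real.log (lam p.2)
        = (t / 2) * ((lam p.2 - 1) - Real.log (lam p.2)) + (t ^ 2 / 2) * (lam p.2 - 1) ^ 2 := by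
      rw [hudef]; ring
    nlinarith [hlog]
  have hBpos : ∀ j, 0 < B j := by rw [hBdef]; exact fun j => Real.exp_pos _
  -- sum bounds
  have hS1 : ∑ j, ((lam j - 1) - Real.log (lam j)) ≤ Δ ^ 2 := by
    have hstep : ∀ j : Fin n, (lam j - 1) - Real.log (lam j) ≤ (lam j - 1) * (1 - 1 / lam j) := by
      intro j
      have hl := hlampos j
      have hlog := Real.log_le_sub_one_of_pos (show (0:ℝ) < (lam j)⁻¹ by positivity)
      rw [Real.log_inv] at hlog
      have hprod : (lam j - 1) * (1 - 1 / lam j) = (lam j - 1) - (1 - 1 / lam j) := by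
        field_simp
      rw [hprod]
      have : 1 - 1 / lam j ≤ Real.log (lam j) := by
        rw [one_div]; linarith
      linarith
    have hCS : (∑ j, (lam j - 1) * (1 - 1 / lam j)) ^ 2
        ≤ (∑ j, (lam j - 1) ^ 2) * ∑ j, (1 - 1 / lam j) ^ 2 :=
      Finset.sum_mul_sq_le_sq_mul_sq _ _ _
    have hnn : 0 ≤ ∑ j, (lam j - 1) * (1 - 1 / lam j) := by
      apply Finset.sum_nonneg
      intro j _
      have hl := hlampos j
      have : (lam j - 1) * (1 - 1 / lam j) = (lam j - 1) ^ 2 / lam j := by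
        field_simp
      rw [this]; positivity
    have hsq : (∑ j, (lam j - 1) * (1 - 1 / lam j)) ^ 2 ≤ (Δ ^ 2) ^ 2 := by
      calc (∑ j, (lam j - 1) * (1 - 1 / lam j)) ^ 2
          ≤ (∑ j, (lam j - 1) ^ 2) * ∑ j, (1 - 1 / lam j) ^ 2 := hCS
        _ ≤ Δ ^ 2 * Δ ^ 2 := by
            apply mul_le_mul h1 h2 (Finset.sum_nonneg fun j _ => sq_nonneg _) (sq_nonneg _)
        _ = (Δ ^ 2) ^ 2 := by ring
    have hsum_le : ∑ j, (lam j - 1) * (1 - 1 / lam j) ≤ Δ ^ 2 := by nlinarith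
    calc ∑ j, ((lam j - 1) - Real.log (lam j))
        ≤ ∑ j, (lam j - 1) * (1 - 1 / lam j) := Finset.sum_le_sum fun j _ => hstep j
      _ ≤ Δ ^ 2 := hsum_le
  -- product formula for exp (t * Z)
  have hprod : ∀ ω : (Fin k × Fin n) → ℝ, Real.exp (t * Z ω) = ∏ p, g p (ω p) := by
    intro ω
    simp only [hZdef, hgdef]
    have : t * ((1 / 2) * ∑ i, ∑ j, ((lam j - 1) * (ω (i, j)) ^ 2 - Real.log (lam j)))
        = ∑ p : Fin k × Fin n,
            t * ((1 / 2) * ((lam p.2 - 1) * (ω p) ^ 2 - Real.log (lam p.2))) := by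
      rw [Fintype.sum_prod_type]
      simp only [Finset.mul_sum]
    rw [this, Real.exp_sum]
  haveI : IsProbabilityMeasure (Measure.pi (fun _ : Fin k × Fin n => gaussianReal 0 1)) := by
    infer_instance
  have hInt : Integrable (fun ω => Real.exp (t * Z ω))
      (Measure.pi (fun _ : Fin k × Fin n => gaussianReal 0 1)) := by
    have := pi_integrable_prod (ι := Fin k × Fin n) (gaussianReal 0 1) g hIg
    exact this.congr (Filter.Eventually.of_forall fun ω => (hprod ω).symm)
  have hcher := measure_ge_le_exp_mul_mgf (μ := Measure.pi (fun _ : Fin k × Fin n => gaussianReal 0 1))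
    (X := Z) ε ht0.le hInt
  -- bound on the mgf
  have hmgf : mgf Z (Measure.pi (fun _ : Fin k × Fin n => gaussianReal 0 1)) t
      ≤ Real.exp ((k : ℝ) * ((t / 2) * Δ ^ 2 + (t ^ 2 / 2) * Δ ^ 2)) := by
    have hmgf_eq : mgf Z (Measure.pi (fun _ : Fin k × Fin n => gaussianReal 0 1)) t
        = ∏ p : Fin k × Fin n, ∫ x, g p x ∂(gaussianReal 0 1) := by
      rw [mgf]
      rw [show (fun ω => Real.exp (t * Z ω)) = fun ω => ∏ p, g p (ω p) from
        funext fun ω => hprod ω]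
      exact pi_integral_prod (gaussianReal 0 1) g
    rw [hmgf_eq]
    have hstep1 : ∏ p : Fin k × Fin n, ∫ x, g p x ∂(gaussianReal 0 1)
        ≤ ∏ p : Fin k × Fin n, B p.2 := by
      apply Finset.prod_le_prod
      · intro p _
        refine integral_nonneg fun x => ?_
        rw [hg_eq p x]
        positivity
      · intro p _
        exact hIB p
    have hstep2 : ∏ p : Fin k × Fin n, B p.2 = (∏ j, B j) ^ k := by
      rw [Fintype.prod_prod_type]
      simp [Finset.prod_const, Finset.card_univ]
    have hstep3 : ∏ j, B j
        = Real.exp (∑ j, ((t / 2) * ((lam j - 1) - Real.log (lam j))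
            + (t ^ 2 / 2) * (lam j - 1) ^ 2)) := by
      simp only [hBdef]
      rw [Real.exp_sum]
    have hstep4 : ∑ j, ((t / 2) * ((lam j - 1) - Real.log (lam j))
          + (t ^ 2 / 2) * (lam j - 1) ^ 2)
        ≤ (t / 2) * Δ ^ 2 + (t ^ 2 / 2) * Δ ^ 2 := by
      rw [Finset.sum_add_distrib, ← Finset.mul_sum, ← Finset.mul_sum]
      have e1 : (t / 2) * (∑ j, ((lam j - 1) - Real.log (lam j))) ≤ (t / 2) * Δ ^ 2 :=
        mul_le_mul_of_nonneg_left hS1 (by positivity)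
      have e2 : (t ^ 2 / 2) * (∑ j, (lam j - 1) ^ 2) ≤ (t ^ 2 / 2) * Δ ^ 2 :=
        mul_le_mul_of_nonneg_left h1 (by positivity)
      linarith
    calc ∏ p : Fin k × Fin n, ∫ x, g p x ∂(gaussianReal 0 1)
        ≤ ∏ p : Fin k × Fin n, B p.2 := hstep1
      _ = (∏ j, B j) ^ k := hstep2
      _ = Real.exp (∑ j, ((t / 2) * ((lam j - 1) - Real.log (lam j))
            + (t ^ 2 / 2) * (lam j - 1) ^ 2)) ^ k := by rw [hstep3]
      _ = Real.exp ((k : ℝ) * ∑ j, ((t / 2) * ((lam j - 1) - Real.log (lam j))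
            + (t ^ 2 / 2) * (lam j - 1) ^ 2)) := by
          rw [← Real.exp_nat_mul]
      _ ≤ Real.exp ((k : ℝ) * ((t / 2) * Δ ^ 2 + (t ^ 2 / 2) * Δ ^ 2)) := by
          apply Real.exp_le_exp.mpr
          exact mul_le_mul_of_nonneg_left hstep4 hk0.le
  -- final numeric bound on the exponent
  have hnum : -t * ε + (k : ℝ) * ((t / 2) * Δ ^ 2 + (t ^ 2 / 2) * Δ ^ 2) ≤ Real.log δ := by
    have hlogδ : Real.log δ = -L := by rw [hLdef, one_div, Real.log_inv]; ring
    rw [hlogδ]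
    have hhalf : (k : ℝ) * ((t / 2) * Δ ^ 2) ≤ t * ε / 2 := by nlinarith
    have hmain : -(t * ε / 2) + (k : ℝ) * ((t ^ 2 / 2) * Δ ^ 2) ≤ -L := by
      rcases min_cases (ε / (2 * k * Δ ^ 2)) (1 / (2 * Δ)) with ⟨heq, _⟩ | ⟨heq, hcase⟩
      · -- t = ε / (2 k Δ²), use Δ ≤ ε / √(8 k L)
        have hΔle : Δ ≤ ε / Real.sqrt (8 * k * L) := hΔdef ▸ min_le_left _ _
        have hsq : Δ ^ 2 * (8 * k * L) ≤ ε ^ 2 := by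
          have h8 : (0:ℝ) < 8 * k * L := by positivity
          have hspos : 0 < Real.sqrt (8 * k * L) := Real.sqrt_pos.mpr h8
          have hs : Δ * Real.sqrt (8 * k * L) ≤ ε := by
            rw [div_eq_mul_inv] at hΔle
            calc Δ * Real.sqrt (8 * k * L) ≤ ε * (Real.sqrt (8 * k * L))⁻¹ * Real.sqrt (8 * k * L) :=
                  mul_le_mul_of_nonneg_right hΔle hspos.le
              _ = ε := by field_simp
          have hss : Real.sqrt (8 * k * L) * Real.sqrt (8 * k * L) = 8 * k * L :=
            Real.mul_self_sqrt h8.le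
          nlinarith [mul_le_mul hs hs (by positivity) hε0.le, hss, sq_nonneg Δ]
        have htval : t = ε / (2 * k * Δ ^ 2) := htdef.trans heq
        rw [htval]
        have hD : (0:ℝ) < Δ ^ 2 := by positivity
        have hden : (0:ℝ) < 2 * k * Δ ^ 2 := by positivity
        rw [div_pow]
        field_simp
        nlinarith [sq_nonneg ε, mul_pos hk0 hD]
      · -- t = 1/(2Δ), with k Δ ≤ ε
        have htval : t = 1 / (2 * Δ) := htdef.trans heq
        have hkΔε : (k : ℝ) * Δ ≤ ε := by
          have h := hcase
          rw [div_lt_div_iff₀ (by positivity) (by positivity)] at h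
          nlinarith
        have hΔle : Δ ≤ ε / (8 * L) := hΔdef ▸ min_le_right _ _
        have hLb : L * (8 * Δ) ≤ ε := by
          rw [le_div_iff₀ (by positivity)] at hΔle
          nlinarith
        rw [htval]
        rw [div_pow]
        field_simp
        nlinarith [mul_pos hΔpos hΔpos]
    nlinarith
  -- put everything together
  have hfinal : Real.exp (-t * ε) * mgf Z (Measure.pi (fun _ : Fin k × Fin n => gaussianReal 0 1)) t ≤ δ := by
    calc Real.exp (-t * ε) * mgf Z (Measure.pi (fun _ : Fin k × Fin n => gaussianReal 0 1)) t
        ≤ Real.exp (-t * ε) * Real.exp ((k : ℝ) * ((t / 2) * Δ ^ 2 + (t ^ 2 / 2) * Δ ^ 2)) :=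
          mul_le_mul_of_nonneg_left hmgf (Real.exp_pos _).le
      _ = Real.exp (-t * ε + (k : ℝ) * ((t / 2) * Δ ^ 2 + (t ^ 2 / 2) * Δ ^ 2)) := by
          rw [← Real.exp_add]
      _ ≤ Real.exp (Real.log δ) := Real.exp_le_exp.mpr hnum
      _ = δ := Real.exp_log hδ0
  have hsub : {ω : (Fin k × Fin n) → ℝ | Z ω > ε} ⊆ {ω | ε ≤ Z ω} := by
    intro ω hω
    simp only [Set.mem_setOf_eq] at hω ⊢
    exact le_of_lt hω
  calc Measure.pi (fun _ : Fin k × Fin n => gaussianReal 0 1) {ω | Z ω > ε}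
      ≤ Measure.pi (fun _ : Fin k × Fin n => gaussianReal 0 1) {ω | ε ≤ Z ω} :=
        measure_mono hsub
    _ = ENNReal.ofReal ((Measure.pi (fun _ : Fin k × Fin n => gaussianReal 0 1) {ω | ε ≤ Z ω}).toReal) :=
        (ENNReal.ofReal_toReal (measure_ne_top _ _)).symm
    _ ≤ ENNReal.ofReal δ := ENNReal.ofReal_le_ofReal (le_trans hcher hfinal)
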